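/- arXiv:1809.05609 — 3 statements merged into one kernel-verified Lean document; each statement's English description precedes it below -/
import Mathlib

section
/- For the function f(p,q) = ⟨p,q⟩ on S^n × S^n with the product metric g_0 + δ g_0, the squared norm of the gradient satisfies |∇f|² = (1 + 1/δ)(1 - f²). In particular f is an isoparametric function whose only critical values are -1 and 1. -/
open scoped Real

/-- The spherical gradient of `u` at a point `x` of the unit sphere: the gradient
(for the round metric of curvature 1) computed as the Euclidean gradient of the
degree-zero homogeneous extension of `u`. -/
noncomputable def sphGrad {m : ℕ} (u : EuclideanSpace ℝ (Fin m) → ℝ)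
    (x : EuclideanSpace ℝ (Fin m)) : EuclideanSpace ℝ (Fin m) :=
  gradient (fun y => u (‖y‖⁻¹ • y)) x

lemma key {m : ℕ} (p q : EuclideanSpace ℝ (Fin m)) (hp : ‖p‖ = 1) :
    sphGrad (fun x => (inner ℝ x q : ℝ)) p = q - (inner ℝ p q : ℝ) • p := by
  have hfun : (fun y : EuclideanSpace ℝ (Fin m) => (inner ℝ (‖y‖⁻¹ • y) q : ℝ))
      = fun y => ‖y‖⁻¹ * (inner ℝ y q : ℝ) := by
    funext y; rw [real_inner_smul_left]
  -- derivative of y ↦ ‖y‖⁻¹ at p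
  have hnsq : HasFDerivAt (fun y : EuclideanSpace ℝ (Fin m) => ‖y‖ ^ 2)
      (2 • (innerSL ℝ p)) p := (hasStrictFDerivAt_norm_sq p).hasFDerivAt
  have hsq1 : ‖p‖ ^ 2 = 1 := by rw [hp]; norm_num
  have hinv : HasDerivAt (fun t : ℝ => (Real.sqrt t)⁻¹) (-(1/2)) (‖p‖ ^ 2) := by
    have h1 : HasDerivAt Real.sqrt (1 / (2 * Real.sqrt (‖p‖ ^ 2))) (‖p‖ ^ 2) :=
      Real.hasDerivAt_sqrt (by rw [hsq1]; norm_num)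
    have h2 := h1.inv (by rw [hsq1]; simp)
    refine h2.congr_deriv ?_
    rw [hsq1]
    norm_num
  have hninv : HasFDerivAt (fun y : EuclideanSpace ℝ (Fin m) => ‖y‖⁻¹)
      ((-(1/2) : ℝ) • (2 • (innerSL ℝ p))) p := by
    have hfe : (fun y : EuclideanSpace ℝ (Fin m) => ‖y‖⁻¹)
        = ((fun t : ℝ => (Real.sqrt t)⁻¹) ∘ fun y => ‖y‖ ^ 2) := by
      funext y; simp [Function.comp, Real.sqrt_sq (norm_nonneg y)]
    rw [hfe]
    exact hinv.comp_hasFDerivAt p hnsq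
  have hlin : HasFDerivAt (fun y : EuclideanSpace ℝ (Fin m) => (inner ℝ y q : ℝ))
      (innerSL ℝ q) p := by
    have : (fun y : EuclideanSpace ℝ (Fin m) => (inner ℝ y q : ℝ))
        = fun y => innerSL ℝ q y := by
      funext y; simp [real_inner_comm]
    rw [this]
    exact (innerSL ℝ q).hasFDerivAt
  have hmul := hninv.mul hlin
  have hgrad : HasGradientAt (fun y : EuclideanSpace ℝ (Fin m) => ‖y‖⁻¹ * (inner ℝ y q : ℝ))
      (q - (inner ℝ p q : ℝ) • p) p := by
    rw [hasGradientAt_iff_hasFDerivAt]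
    refine hmul.congr_fderiv ?_
    ext1 v
    simp [InnerProductSpace.toDual_apply_apply, hp, inner_sub_left, real_inner_smul_left,
      real_inner_comm p v]
    ring
  rw [sphGrad, hfun]
  exact hgrad.gradient

/-- for `f(p,q) = ⟨p,q⟩` on `(S^n × S^n, g₀ + δ g₀)` (the squared
gradient norm for the product metric being `|∇₁f|² + δ⁻¹|∇₂f|²`), one has
`|∇f|² = (1 + 1/δ)(1 - f²)`; in particular the only critical values of the
isoparametric function `f` are `-1` and `1`. -/
theorem grad_inner_product_spheres (n : ℕ) (hn : 2 ≤ n) (δ : ℝ) (hδ : 0 < δ)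
    (p q : EuclideanSpace ℝ (Fin (n + 1)))
    (hp : p ∈ Metric.sphere (0 : EuclideanSpace ℝ (Fin (n + 1))) 1)
    (hq : q ∈ Metric.sphere (0 : EuclideanSpace ℝ (Fin (n + 1))) 1) :
    ‖sphGrad (fun x => (inner ℝ x q : ℝ)) p‖ ^ 2
        + δ⁻¹ * ‖sphGrad (fun y => (inner ℝ p y : ℝ)) q‖ ^ 2
      = (1 + 1 / δ) * (1 - (inner ℝ p q : ℝ) ^ 2) ∧
    ((sphGrad (fun x => (inner ℝ x q : ℝ)) p = 0 ∧
        sphGrad (fun y => (inner ℝ p y : ℝ)) q = 0) →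
      (inner ℝ p q : ℝ) = 1 ∨ (inner ℝ p q : ℝ) = -1) := by
  have hp1 : ‖p‖ = 1 := by simpa using hp
  have hq1 : ‖q‖ = 1 := by simpa using hq
  have h1 : sphGrad (fun x => (inner ℝ x q : ℝ)) p = q - (inner ℝ p q : ℝ) • p := key p q hp1
  have h2 : sphGrad (fun y => (inner ℝ p y : ℝ)) q = p - (inner ℝ p q : ℝ) • q := by
    have : (fun y : EuclideanSpace ℝ (Fin (n + 1)) => (inner ℝ p y : ℝ))
        = fun y => (inner ℝ y p : ℝ) := funext fun y => real_inner_comm _ _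
    rw [this, key q p hq1, real_inner_comm q p]
  set t : ℝ := (inner ℝ p q : ℝ) with ht
  have hqp : (inner ℝ q p : ℝ) = t := by rw [ht]; exact real_inner_comm p q
  have e1 : ‖q - t • p‖ ^ 2 = 1 - t ^ 2 := by
    rw [norm_sub_sq_real, norm_smul, real_inner_smul_right, hp1, hq1, hqp]
    simp only [Real.norm_eq_abs, mul_pow, sq_abs]
    ring
  have e2 : ‖p - t • q‖ ^ 2 = 1 - t ^ 2 := by
    rw [norm_sub_sq_real, norm_smul, real_inner_smul_right, hp1, hq1, ← ht]
    simp only [Real.norm_eq_abs, mul_pow, sq_abs]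
    ring
  constructor
  · rw [h1, h2, e1, e2]
    field_simp
  · rintro ⟨g1, _⟩
    have hz : q - t • p = 0 := by rw [← h1]; exact g1
    have h0 : (1 : ℝ) - t ^ 2 = 0 := by rw [← e1, hz]; simp
    have : (t - 1) * (t + 1) = 0 := by nlinarith
    rcases mul_eq_zero.mp this with h | h
    · left; linarith
    · right; linarith
end

section
/- Let u = φ ∘ f where f(p,q) = ⟨p,q⟩ on (S^n × S^n, g_0 + δ g_0) and φ : [-1,1] → ℝ is C². Then u solves -Δu + λu = λ|u|^{p-2}u on S^n × S^n if and only if φ solves the ODE -(1-t²)φ''(t) + n t φ'(t) + (λ/(1+1/δ)) φ(t) = (λ/(1+1/δ)) |φ(t)|^{p-2} φ(t) on [-1,1]. -/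
open scoped Real
open Set

/-- Euclidean Laplacian of `F : ℝ^m → ℝ` (sum of second partial derivatives). -/
noncomputable def eucLap {m : ℕ} (F : EuclideanSpace ℝ (Fin m) → ℝ)
    (x : EuclideanSpace ℝ (Fin m)) : ℝ :=
  ∑ i : Fin m, fderiv ℝ (fun y => fderiv ℝ F y (EuclideanSpace.single i 1)) x
    (EuclideanSpace.single i 1)

/-- Spherical Laplacian of `u`, via the degree-zero homogeneous extension. -/
noncomputable def sphLap {m : ℕ} (u : EuclideanSpace ℝ (Fin m) → ℝ)
    (x : EuclideanSpace ℝ (Fin m)) : ℝ :=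
  eucLap (fun y => u (‖y‖⁻¹ • y)) x

open scoped RealInnerProductSpace

section aux
variable {E : Type*} [NormedAddCommGroup E] [InnerProductSpace ℝ E]

lemma hasFDerivAt_invNorm {z : E} (hz : z ≠ 0) :
    HasFDerivAt (fun w : E => ‖w‖⁻¹) ((-(‖z‖ ^ 3)⁻¹) • innerSL ℝ z) z := by
  have hnz : (0 : ℝ) < ‖z‖ := norm_pos_iff.mpr hz
  have h1 : HasFDerivAt (fun w : E => ‖w‖ ^ 2) ((2 : ℝ) • innerSL ℝ z) z := by
    have := (hasStrictFDerivAt_norm_sq z).hasFDerivAt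
    convert this using 1
    ext v; simp [two_smul]
  have hs : HasDerivAt Real.sqrt (1 / (2 * ‖z‖)) (‖z‖ ^ 2) := by
    have := Real.hasDerivAt_sqrt (x := ‖z‖ ^ 2) (by positivity)
    rwa [Real.sqrt_sq hnz.le] at this
  have h2 : HasDerivAt (fun s : ℝ => (Real.sqrt s)⁻¹)
      (-(1 / (2 * ‖z‖)) / ‖z‖ ^ 2) (‖z‖ ^ 2) := by
    have := hs.inv (by rw [Real.sqrt_sq hnz.le]; positivity)
    rw [Real.sqrt_sq hnz.le] at this
    exact this
  have h3 := h2.comp_hasFDerivAt z h1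
  rw [show ((fun s : ℝ => (Real.sqrt s)⁻¹) ∘ fun w : E => ‖w‖ ^ 2) = fun w : E => ‖w‖⁻¹ from
    funext fun w => by simp [Function.comp, Real.sqrt_sq (norm_nonneg w)]] at h3
  refine h3.congr_fderiv ?_
  ext v
  simp only [ContinuousLinearMap.smul_apply, ContinuousLinearMap.coe_smul', Pi.smul_apply,
    smul_eq_mul]
  ring

lemma hasFDerivAt_inner_right (w z : E) :
    HasFDerivAt (fun u : E => ⟪u, w⟫) (innerSL ℝ w) z := by
  rw [show (fun u : E => ⟪u, w⟫) = fun u => innerSL ℝ w u from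
    funext fun u => by rw [innerSL_apply_apply]; exact (real_inner_comm u w).symm]
  exact (innerSL ℝ w).hasFDerivAt

end aux

lemma euc_inner_eq_sum {m : ℕ} (x y : EuclideanSpace ℝ (Fin m)) :
    (inner ℝ x y : ℝ) = ∑ i, x i * y i := by
  simp [PiLp.inner_apply, RCLike.inner_apply, mul_comm]

lemma deriv_differentiable_of_contDiff_two {φ : ℝ → ℝ} (hφ : ContDiff ℝ 2 φ) :
    Differentiable ℝ (deriv φ) := by
  have h2 : ContDiff ℝ ((1 : ℕ) + 1) φ := by norm_num; exact hφ
  exact (contDiff_succ_iff_deriv.mp h2).2.2.differentiable (by norm_num)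

lemma sphLap_inner {m : ℕ} (φ : ℝ → ℝ) (hφ : ContDiff ℝ 2 φ)
    (x y : EuclideanSpace ℝ (Fin (m + 1))) (hx : ‖x‖ = 1) (hy : ‖y‖ = 1) :
    sphLap (fun z => φ (inner ℝ z y : ℝ)) x
      = (1 - (inner ℝ x y : ℝ) ^ 2) * deriv (deriv φ) (inner ℝ x y : ℝ)
        - m * (inner ℝ x y : ℝ) * deriv φ (inner ℝ x y : ℝ) := by
  have hx0 : x ≠ 0 := fun h => by simp [h] at hx
  have hφ1 : Differentiable ℝ φ := hφ.differentiable (by norm_num)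
  have hφ2 : Differentiable ℝ (deriv φ) := deriv_differentiable_of_contDiff_two hφ
  set t : ℝ := ⟪x, y⟫ with ht
  set g : EuclideanSpace ℝ (Fin (m + 1)) → ℝ := fun z => ‖z‖⁻¹ * ⟪z, y⟫ with hgdef
  -- first derivative of φ ∘ g at any z ≠ 0
  have hg : ∀ z : EuclideanSpace ℝ (Fin (m + 1)), z ≠ 0 → HasFDerivAt g
      (‖z‖⁻¹ • innerSL ℝ y + ⟪z, y⟫ • ((-(‖z‖ ^ 3)⁻¹) • innerSL ℝ z)) z :=
    fun z hz => (hasFDerivAt_invNorm hz).mul (hasFDerivAt_inner_right y z)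
  have hF : ∀ z : EuclideanSpace ℝ (Fin (m + 1)), z ≠ 0 → HasFDerivAt (fun w => φ (g w))
      (deriv φ (g z) • (‖z‖⁻¹ • innerSL ℝ y + ⟪z, y⟫ • ((-(‖z‖ ^ 3)⁻¹) • innerSL ℝ z))) z :=
    fun z hz => ((hφ1 (g z)).hasDerivAt).comp_hasFDerivAt z (hg z hz)
  have hgx : g x = t := by
    rw [hgdef]; simp only [hx, inv_one, one_mul]; exact ht.symm
  -- key: second directional derivative
  have key : ∀ v : EuclideanSpace ℝ (Fin (m + 1)), fderiv ℝ (fun z => fderiv ℝ (fun w => φ (g w)) z v) x v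
      = deriv (deriv φ) t * (⟪y, v⟫ - t * ⟪x, v⟫) ^ 2
        + deriv φ t * (3 * t * ⟪x, v⟫ ^ 2 - 2 * ⟪x, v⟫ * ⟪y, v⟫ - t * ⟪v, v⟫) := by
    intro v
    have hev : (fun z => fderiv ℝ (fun w => φ (g w)) z v) =ᶠ[nhds x]
        (fun z => deriv φ (g z) * (‖z‖⁻¹ * ⟪y, v⟫
          - (‖z‖ ^ 3)⁻¹ * ⟪z, y⟫ * ⟪z, v⟫)) := by
      filter_upwards [isOpen_compl_singleton.mem_nhds
        (show x ∈ ({(0 : EuclideanSpace ℝ (Fin (m + 1)))}ᶜ : Set (EuclideanSpace ℝ (Fin (m + 1)))) from hx0)] with z hz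
      rw [(hF z hz).fderiv]
      simp only [ContinuousLinearMap.smul_apply, ContinuousLinearMap.add_apply,
        innerSL_apply_apply, smul_eq_mul, ContinuousLinearMap.neg_apply]
      ring
    rw [Filter.EventuallyEq.fderiv_eq hev]
    -- differentiate the explicit formula
    have hinv := hasFDerivAt_invNorm hx0
    have hcube := (hinv.mul hinv).mul hinv
    simp only [Pi.mul_def] at hcube
    rw [show (fun w : EuclideanSpace ℝ (Fin (m + 1)) => ‖w‖⁻¹ * ‖w‖⁻¹ * ‖w‖⁻¹) = fun w : EuclideanSpace ℝ (Fin (m + 1)) => (‖w‖ ^ 3)⁻¹ from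
      funext fun w => by rw [← inv_pow]; ring] at hcube
    have hd : HasFDerivAt (fun w : EuclideanSpace ℝ (Fin (m + 1)) => deriv φ (g w))
        (deriv (deriv φ) (g x) • (‖x‖⁻¹ • innerSL ℝ y
          + ⟪x, y⟫ • ((-(‖x‖ ^ 3)⁻¹) • innerSL ℝ x))) x :=
      ((hφ2 (g x)).hasDerivAt).comp_hasFDerivAt x (hg x hx0)
    have hrest := (hinv.mul_const (⟪y, v⟫)).sub
      ((hcube.mul (hasFDerivAt_inner_right y x)).mul (hasFDerivAt_inner_right v x))
    have htot := hd.mul hrest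
    simp only [Pi.mul_def, Pi.sub_def] at htot
    rw [htot.fderiv]
    simp only [ContinuousLinearMap.add_apply, ContinuousLinearMap.sub_apply,
      ContinuousLinearMap.smul_apply, innerSL_apply_apply, smul_eq_mul, hgx, hx]
    ring
  -- assemble the Laplacian
  have hFeq : (fun z : EuclideanSpace ℝ (Fin (m + 1)) => (fun z : EuclideanSpace ℝ (Fin (m + 1)) => φ ⟪z, y⟫) (‖z‖⁻¹ • z)) = fun z => φ (g z) :=
    funext fun z => by
      rw [show ((fun z : EuclideanSpace ℝ (Fin (m + 1)) => φ ⟪z, y⟫) (‖z‖⁻¹ • z))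
          = φ ⟪‖z‖⁻¹ • z, y⟫ from rfl, real_inner_smul_left]
  rw [show sphLap (fun z => φ (inner ℝ z y : ℝ)) x
      = ∑ i : Fin (m + 1), fderiv ℝ (fun z => fderiv ℝ (fun w => φ (g w)) z
          (EuclideanSpace.single i 1)) x (EuclideanSpace.single i 1) from by
    rw [sphLap, eucLap, ← hFeq]]
  have hxi : ∀ i : Fin (m + 1), ⟪x, EuclideanSpace.single i (1 : ℝ)⟫ = x i := by
    intro i; rw [EuclideanSpace.inner_single_right]; simp
  have hyi : ∀ i : Fin (m + 1), ⟪y, EuclideanSpace.single i (1 : ℝ)⟫ = y i := by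
    intro i; rw [EuclideanSpace.inner_single_right]; simp
  have hii : ∀ i : Fin (m + 1),
      ⟪(EuclideanSpace.single i (1 : ℝ) : EuclideanSpace ℝ (Fin (m + 1))), EuclideanSpace.single i (1 : ℝ)⟫ = 1 := by
    intro i
    rw [EuclideanSpace.inner_single_right]; simp [EuclideanSpace.single_apply]
  have hterm : ∀ i : Fin (m + 1),
      fderiv ℝ (fun z => fderiv ℝ (fun w => φ (g w)) z (EuclideanSpace.single i 1)) x
        (EuclideanSpace.single i 1)
      = deriv (deriv φ) t * (y i - t * x i) ^ 2
        + deriv φ t * (3 * t * (x i) ^ 2 - 2 * x i * y i - t) := by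
    intro i
    rw [key (EuclideanSpace.single i 1), hxi i, hyi i, hii i]; ring
  rw [Finset.sum_congr rfl fun i _ => hterm i]
  -- now compute the sum
  have hexp : ∀ i : Fin (m + 1),
      deriv (deriv φ) t * (y i - t * x i) ^ 2
        + deriv φ t * (3 * t * (x i) ^ 2 - 2 * x i * y i - t)
      = (deriv (deriv φ) t * t ^ 2 + 3 * deriv φ t * t) * (x i * x i)
        + (-2 * deriv (deriv φ) t * t - 2 * deriv φ t) * (x i * y i)
        + deriv (deriv φ) t * (y i * y i) + (-(deriv φ t * t)) := fun i => by ring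
  rw [Finset.sum_congr rfl fun i _ => hexp i]
  have hxx : ∑ i : Fin (m + 1), x i * x i = 1 := by
    rw [← euc_inner_eq_sum x x, real_inner_self_eq_norm_sq, hx]; norm_num
  have hyy : ∑ i : Fin (m + 1), y i * y i = 1 := by
    rw [← euc_inner_eq_sum y y, real_inner_self_eq_norm_sq, hy]; norm_num
  have hxy : ∑ i : Fin (m + 1), x i * y i = t := by
    rw [ht, euc_inner_eq_sum x y]
  rw [Finset.sum_add_distrib, Finset.sum_add_distrib, Finset.sum_add_distrib,
    ← Finset.mul_sum, ← Finset.mul_sum, ← Finset.mul_sum, hxx, hyy, hxy,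
    Finset.sum_const, Finset.card_univ, Fintype.card_fin, nsmul_eq_mul]
  push_cast
  ring

/-- for a C² function `φ : [-1,1] → ℝ`, the invariant function
`u = φ ∘ f`, `f(p,q) = ⟨p,q⟩`, solves `-Δu + λu = λ|u|^{p-2}u` on
`(S^n × S^n, g₀ + δ g₀)` (the Laplacian of the product metric being
`Δ₁ + δ⁻¹ Δ₂`) if and only if `φ` solves
`-(1-t²)φ'' + n t φ' + (λ/(1+1/δ))φ = (λ/(1+1/δ))|φ|^{p-2}φ` on `[-1,1]`. -/
theorem invariant_yamabe_reduction
    (n : ℕ) (hn : 2 ≤ n) (δ lam p : ℝ) (hδ : 0 < δ) (hlam : 0 < lam) (hp : 2 < p)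
    (φ : ℝ → ℝ) (hφ : ContDiff ℝ 2 φ) :
    (∀ x ∈ Metric.sphere (0 : EuclideanSpace ℝ (Fin (n + 1))) 1,
      ∀ y ∈ Metric.sphere (0 : EuclideanSpace ℝ (Fin (n + 1))) 1,
      -(sphLap (fun z => φ (inner ℝ z y : ℝ)) x
          + δ⁻¹ * sphLap (fun z => φ (inner ℝ x z : ℝ)) y)
        + lam * φ (inner ℝ x y : ℝ)
        = lam * |φ (inner ℝ x y : ℝ)| ^ (p - 2) * φ (inner ℝ x y : ℝ)) ↔
    (∀ t ∈ Icc (-1 : ℝ) 1,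
      -(1 - t ^ 2) * deriv (deriv φ) t + (n : ℝ) * t * deriv φ t
          + (lam / (1 + 1 / δ)) * φ t
        = (lam / (1 + 1 / δ)) * |φ t| ^ (p - 2) * φ t) := by
  have hc0 : (0 : ℝ) < 1 + 1 / δ := by positivity
  have hc : (1 + 1 / δ : ℝ) ≠ 0 := hc0.ne'
  set μ : ℝ := lam / (1 + 1 / δ) with hμ
  have hlam' : lam = μ * (1 + 1 / δ) := by rw [hμ]; field_simp
  constructor
  · intro H t ht
    -- construct a pair of points realizing inner product t
    set i0 : Fin (n + 1) := ⟨0, by omega⟩ with hi0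
    set i1 : Fin (n + 1) := ⟨1, by omega⟩ with hi1
    have hne : i1 ≠ i0 := by simp [hi0, hi1, Fin.ext_iff]
    set x : EuclideanSpace ℝ (Fin (n + 1)) := EuclideanSpace.single i0 (1 : ℝ) with hxdef
    set s : ℝ := Real.sqrt (1 - t ^ 2) with hs
    have hs2 : s ^ 2 = 1 - t ^ 2 := Real.sq_sqrt (by nlinarith [ht.1, ht.2])
    set y : EuclideanSpace ℝ (Fin (n + 1)) :=
      t • EuclideanSpace.single i0 (1 : ℝ) + s • EuclideanSpace.single i1 (1 : ℝ) with hydef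
    have h00 : ⟪(EuclideanSpace.single i0 (1 : ℝ) : EuclideanSpace ℝ (Fin (n + 1))),
        EuclideanSpace.single i0 (1 : ℝ)⟫ = 1 := by
      rw [EuclideanSpace.inner_single_left]; simp [EuclideanSpace.single_apply]
    have h01 : ⟪(EuclideanSpace.single i0 (1 : ℝ) : EuclideanSpace ℝ (Fin (n + 1))),
        EuclideanSpace.single i1 (1 : ℝ)⟫ = 0 := by
      rw [EuclideanSpace.inner_single_left]; simp [EuclideanSpace.single_apply, hne.symm]
    have h11 : ⟪(EuclideanSpace.single i1 (1 : ℝ) : EuclideanSpace ℝ (Fin (n + 1))),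
        EuclideanSpace.single i1 (1 : ℝ)⟫ = 1 := by
      rw [EuclideanSpace.inner_single_left]; simp [EuclideanSpace.single_apply]
    have h10 : ⟪(EuclideanSpace.single i1 (1 : ℝ) : EuclideanSpace ℝ (Fin (n + 1))),
        EuclideanSpace.single i0 (1 : ℝ)⟫ = 0 := by
      rw [EuclideanSpace.inner_single_left]; simp [EuclideanSpace.single_apply, hne]
    have hxn : ‖x‖ = 1 := by rw [hxdef]; simp
    have hxy : (inner ℝ x y : ℝ) = t := by
      rw [hxdef, hydef, inner_add_right, real_inner_smul_right, real_inner_smul_right,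
        h00, h01]
      ring
    have hyy : (inner ℝ y y : ℝ) = 1 := by
      rw [hydef, inner_add_right, inner_add_left, inner_add_left, real_inner_smul_left,
        real_inner_smul_left, real_inner_smul_left, real_inner_smul_left,
        real_inner_smul_right, real_inner_smul_right, real_inner_smul_right,
        real_inner_smul_right, h00, h01, h10, h11]
      nlinarith [hs2]
    have hyn : ‖y‖ = 1 := by
      have h2 : ‖y‖ ^ 2 = 1 := by rw [← real_inner_self_eq_norm_sq, hyy]
      rw [← Real.sqrt_sq (norm_nonneg y), h2, Real.sqrt_one]
    have h := H x (by rwa [mem_sphere_zero_iff_norm]) y (by rwa [mem_sphere_zero_iff_norm])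
    rw [sphLap_inner φ hφ x y hxn hyn] at h
    rw [show (fun z : EuclideanSpace ℝ (Fin (n + 1)) => φ (inner ℝ x z : ℝ))
        = fun z => φ (inner ℝ z x : ℝ) from funext fun z => by rw [real_inner_comm]] at h
    rw [sphLap_inner φ hφ y x hyn hxn, real_inner_comm x y, hxy, hlam'] at h
    apply mul_left_cancel₀ hc
    linear_combination h
  · intro H x hx y hy
    rw [mem_sphere_zero_iff_norm] at hx hy
    have ht : (inner ℝ x y : ℝ) ∈ Icc (-1 : ℝ) 1 := by
      have := abs_real_inner_le_norm x y
      rw [hx, hy] at this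
      exact abs_le.mp (by simpa using this)
    have h := H _ ht
    rw [sphLap_inner φ hφ x y hx hy]
    rw [show (fun z : EuclideanSpace ℝ (Fin (n + 1)) => φ (inner ℝ x z : ℝ))
        = fun z => φ (inner ℝ z x : ℝ) from funext fun z => by rw [real_inner_comm]]
    rw [sphLap_inner φ hφ y x hy hx, real_inner_comm x y, hlam']
    linear_combination (1 + 1 / δ) * h
end

section
/- Let k ≥ 1 and λ_k = (k(k+n-1)/(p-2))(1+1/δ). The kernel of the linearized operator L_k(v) = -Δv - λ_k(p-2)v on invariant functions on (S^n × S^n, g_0 + δ g_0) is one-dimensional, spanned by w_{β_k} ∘ arccos ∘ f with β_k = k(n+k-1). Moreover (p-2)w_{β_k} does not lie in the range of L_k, where the range is {y : ∫₀^π y w_{β_k} dr = 0} (orthogonality with respect to the measure induced on [0,π]). -/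
open scoped Real
open Set

lemma cot_anti {r b : ℝ} (hr : 0 < r) (hrb : r ≤ b) (hb : b < π) :
    Real.cos b / Real.sin b ≤ Real.cos r / Real.sin r := by
  have hsr : 0 < Real.sin r := Real.sin_pos_of_pos_of_lt_pi hr (lt_of_le_of_lt hrb hb)
  have hsb : 0 < Real.sin b := Real.sin_pos_of_pos_of_lt_pi (lt_of_lt_of_le hr hrb) hb
  rw [div_le_div_iff₀ hsb hsr]
  have h := Real.sin_nonneg_of_nonneg_of_le_pi (x := b - r) (by linarith) (by linarith)
  rw [Real.sin_sub] at h
  nlinarith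

lemma ode_unique (n : ℕ) (hn : 2 ≤ n) (β : ℝ) (hβ : 0 ≤ β) (v v' v'' : ℝ → ℝ)
    (hd1 : ∀ r ∈ Icc (0:ℝ) π, HasDerivAt v (v' r) r)
    (hd2 : ∀ r ∈ Icc (0:ℝ) π, HasDerivAt v' (v'' r) r)
    (hode : ∀ r ∈ Ioo (0:ℝ) π,
      v'' r + ((n : ℝ) - 1) * (Real.cos r / Real.sin r) * v' r + β * v r = 0)
    (h0 : v 0 = 0) (h0' : v' 0 = 0) :
    ∀ r ∈ Icc (0:ℝ) π, v r = 0 := by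
  have hπ := Real.pi_pos
  have hm : (1:ℝ) ≤ (n:ℝ) - 1 := by
    have : (2:ℝ) ≤ (n:ℝ) := by exact_mod_cast hn
    linarith
  -- main claim: v b = 0 for all b in (0, π)
  have key : ∀ b ∈ Ioo (0:ℝ) π, v b = 0 ∧ v' b = 0 := by
    intro b hb
    set cb : ℝ := Real.cos b / Real.sin b with hcb
    set K : ℝ := 1 + β + 2 * ((n:ℝ) - 1) * |cb| with hK
    set F : ℝ → ℝ := fun r => (v r * v r + v' r * v' r) * Real.exp (-K * r) with hF
    have hsub : Icc (0:ℝ) b ⊆ Icc (0:ℝ) π := Icc_subset_Icc le_rfl hb.2.le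
    have hFd : ∀ r ∈ Ioo (0:ℝ) b, HasDerivAt F
        ((v' r * v r + v r * v' r + (v'' r * v' r + v' r * v'' r)) * Real.exp (-K * r)
          + (v r * v r + v' r * v' r) * (Real.exp (-K * r) * (-K))) r := by
      intro r hr
      have hrI : r ∈ Icc (0:ℝ) π := hsub ⟨hr.1.le, hr.2.le⟩
      have he : HasDerivAt (fun r : ℝ => Real.exp (-K * r)) (Real.exp (-K * r) * (-K)) r := by
        have := ((hasDerivAt_id r).const_mul (-K)).exp
        simpa using this
      exact ((((hd1 r hrI).mul (hd1 r hrI)).add ((hd2 r hrI).mul (hd2 r hrI))).mul he)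
    have hvc : ContinuousOn v (Icc 0 b) := fun r hr =>
      ((hd1 r (hsub hr)).continuousAt).continuousWithinAt
    have hvc' : ContinuousOn v' (Icc 0 b) := fun r hr =>
      ((hd2 r (hsub hr)).continuousAt).continuousWithinAt
    have hFc : ContinuousOn F (Icc 0 b) := by
      exact ((hvc.mul hvc).add (hvc'.mul hvc')).mul
        (Real.continuous_exp.comp (continuous_const.mul continuous_id)).continuousOn
    have hanti : AntitoneOn F (Icc 0 b) := by
      apply antitoneOn_of_deriv_nonpos (convex_Icc 0 b) hFc
      · intro r hr
        rw [interior_Icc] at hr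
        exact (hFd r hr).differentiableAt.differentiableWithinAt
      · intro r hr
        rw [interior_Icc] at hr
        rw [(hFd r hr).deriv]
        have hrI : r ∈ Ioo (0:ℝ) π := ⟨hr.1, lt_trans hr.2 hb.2⟩
        have hodeR : v'' r = -(((n:ℝ) - 1) * (Real.cos r / Real.sin r) * v' r) - β * v r := by
          have := hode r hrI; linarith
        have hcot : cb ≤ Real.cos r / Real.sin r := cot_anti hr.1 hr.2.le hb.2
        have hepos : 0 < Real.exp (-K * r) := Real.exp_pos _
        rw [hodeR]
        set a := v r; set a' := v' r; set c0 := Real.cos r / Real.sin r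
        have habs : -c0 ≤ |cb| := le_trans (by linarith [neg_le_neg hcot]) (neg_le_abs cb)
        have h1 : (-c0) * a' ^ 2 ≤ |cb| * a' ^ 2 :=
          mul_le_mul_of_nonneg_right habs (sq_nonneg _)
        have hinner : a' * a + a * a' + ((-(((n:ℝ)-1) * c0 * a') - β * a) * a'
            + a' * (-(((n:ℝ)-1) * c0 * a') - β * a)) + (a * a + a' * a') * (-K) ≤ 0 := by
          rw [hK]
          nlinarith [sq_nonneg (a + a'), sq_nonneg (a - a'), sq_nonneg a, sq_nonneg a',
            mul_nonneg hβ (sq_nonneg (a + a')), mul_nonneg hβ (sq_nonneg (a - a')),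
            mul_nonneg (abs_nonneg cb) (sq_nonneg a),
            mul_le_mul_of_nonneg_left h1 (by linarith : (0:ℝ) ≤ 2 * ((n:ℝ) - 1))]
        calc (a' * a + a * a' + ((-(((n:ℝ)-1) * c0 * a') - β * a) * a'
              + a' * (-(((n:ℝ)-1) * c0 * a') - β * a))) * Real.exp (-K * r)
              + (a * a + a' * a') * (Real.exp (-K * r) * (-K))
            = (a' * a + a * a' + ((-(((n:ℝ)-1) * c0 * a') - β * a) * a'
              + a' * (-(((n:ℝ)-1) * c0 * a') - β * a)) + (a * a + a' * a') * (-K))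
              * Real.exp (-K * r) := by ring
          _ ≤ 0 := mul_nonpos_of_nonpos_of_nonneg (by linarith) hepos.le
    have hFb : F b ≤ 0 := by
      have := hanti (left_mem_Icc.mpr hb.1.le) (right_mem_Icc.mpr hb.1.le) hb.1.le
      simpa [hF, h0, h0'] using this
    have hFb' : 0 ≤ F b := by
      have : (0:ℝ) ≤ v b * v b + v' b * v' b := by nlinarith [sq_nonneg (v b), sq_nonneg (v' b)]
      exact mul_nonneg this (Real.exp_pos _).le
    have hE0 : v b * v b + v' b * v' b = 0 := by
      have hFeq : F b = 0 := le_antisymm hFb hFb'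
      have := Real.exp_pos (-K * b)
      rw [hF] at hFeq
      simp only at hFeq
      rcases mul_eq_zero.mp hFeq with h | h
      · exact h
      · exact absurd h this.ne'
    constructor <;> nlinarith [sq_nonneg (v b), sq_nonneg (v' b), mul_self_nonneg (v b), mul_self_nonneg (v' b)]
  intro r hr
  rcases eq_or_lt_of_le hr.1 with h | h
  · rw [← h]; exact h0
  rcases eq_or_lt_of_le hr.2 with h2 | h2
  · -- r = π : by continuity
    have hcont : ContinuousAt v π := (hd1 π (right_mem_Icc.mpr hπ.le)).continuousAt
    have htend : Filter.Tendsto v (nhdsWithin π (Iio π)) (nhds (v π)) :=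
      hcont.continuousWithinAt.tendsto
    have hev : ∀ᶠ x in nhdsWithin π (Iio π), v x = 0 := by
      filter_upwards [Ioo_mem_nhdsLT_of_mem (by constructor <;> [linarith; rfl] :
        π ∈ Ioc (π/2) π), self_mem_nhdsWithin] with x hx hx'
      exact (key x ⟨by linarith [hx.1], hx'⟩).1
    have : Filter.Tendsto v (nhdsWithin π (Iio π)) (nhds 0) :=
      Filter.Tendsto.congr' (Filter.EventuallyEq.symm hev) tendsto_const_nhds
    have := tendsto_nhds_unique htend this
    rw [h2]; exact this
  · exact (key r ⟨h, h2⟩).1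

/-- the kernel of the linearized operator
`L_k(v) = -Δv - λ_k(p-2)v` on invariant functions, identified with functions `w`
on `[0,π]` with `w'(0) = w'(π) = 0` solving
`w'' + (n-1)(cos r/sin r)w' + k(n+k-1)w = 0`, is one-dimensional, spanned by
`w_{β_k}`; and `(p-2)w_{β_k}` is not in the range of `L_k`, i.e. it is not
orthogonal to `w_{β_k}` for the induced measure `sin^{n-1} r dr` on `[0,π]`. -/
theorem kernel_one_dimensional_and_transversality
    (n k : ℕ) (hn : 2 ≤ n) (hk : 1 ≤ k) (δ p : ℝ) (hδ : 0 < δ)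
    (hp : p ∈ Ioo (2:ℝ) ((4 * n : ℝ) / (2 * n - 2)))
    (wk wk' wk'' : ℝ → ℝ)
    (hd1 : ∀ r ∈ Icc (0:ℝ) π, HasDerivAt wk (wk' r) r)
    (hd2 : ∀ r ∈ Icc (0:ℝ) π, HasDerivAt wk' (wk'' r) r)
    (hc : ContinuousOn wk'' (Icc (0:ℝ) π))
    (hode : ∀ r ∈ Ioo (0:ℝ) π,
      wk'' r + ((n : ℝ) - 1) * (Real.cos r / Real.sin r) * wk' r
        + ((k : ℝ) * ((n : ℝ) + (k : ℝ) - 1)) * wk r = 0)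
    (h0 : wk 0 = 1) (h0' : wk' 0 = 0) (hπ' : wk' π = 0) :
    (∀ w w' w'' : ℝ → ℝ,
      (∀ r ∈ Icc (0:ℝ) π, HasDerivAt w (w' r) r) →
      (∀ r ∈ Icc (0:ℝ) π, HasDerivAt w' (w'' r) r) →
      ContinuousOn w'' (Icc (0:ℝ) π) →
      (∀ r ∈ Ioo (0:ℝ) π,
        w'' r + ((n : ℝ) - 1) * (Real.cos r / Real.sin r) * w' r
          + ((k : ℝ) * ((n : ℝ) + (k : ℝ) - 1)) * w r = 0) →
      w' 0 = 0 → w' π = 0 →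
      ∃ c : ℝ, ∀ r ∈ Icc (0:ℝ) π, w r = c * wk r) ∧
    (∫ r in Ioo (0:ℝ) π, ((p - 2) * wk r) * wk r * Real.sin r ^ (n - 1)) ≠ 0 := by
  have hπ := Real.pi_pos
  have hn' : (2:ℝ) ≤ (n:ℝ) := by exact_mod_cast hn
  have hk' : (1:ℝ) ≤ (k:ℝ) := by exact_mod_cast hk
  have hβ : (0:ℝ) ≤ (k : ℝ) * ((n : ℝ) + (k : ℝ) - 1) := by nlinarith
  constructor
  · intro w w' w'' hw1 hw2 hwc hwode hw0' hwπ'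
    refine ⟨w 0, ?_⟩
    have hzero : ∀ r ∈ Icc (0:ℝ) π, (fun r => w r - w 0 * wk r) r = 0 := by
      apply ode_unique n hn _ hβ _ (fun r => w' r - w 0 * wk' r)
        (fun r => w'' r - w 0 * wk'' r)
      · intro r hr
        exact (hw1 r hr).sub ((hd1 r hr).const_mul (w 0))
      · intro r hr
        exact (hw2 r hr).sub ((hd2 r hr).const_mul (w 0))
      · intro r hr
        have h1 := hwode r hr
        have h2 := hode r hr
        linear_combination h1 - w 0 * h2
      · simp [h0]
      · simp [hw0', h0']
    intro r hr
    have := hzero r hr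
    simp only at this
    linarith
  · -- positivity of the integral
    set g : ℝ → ℝ := fun r => ((p - 2) * wk r) * wk r * Real.sin r ^ (n - 1) with hg
    have hwkc : ContinuousOn wk (Icc (0:ℝ) π) := fun r hr =>
      ((hd1 r hr).continuousAt).continuousWithinAt
    have hgc : ContinuousOn g (Icc (0:ℝ) π) := by
      exact ((continuousOn_const.mul hwkc).mul hwkc).mul
        ((Real.continuous_sin.continuousOn).pow _)
    have hInt : MeasureTheory.IntegrableOn g (Ioo (0:ℝ) π) := by
      exact (hgc.integrableOn_compact isCompact_Icc).mono_set Ioo_subset_Icc_self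
    have hp2 : 0 < p - 2 := by linarith [hp.1]
    have hnonneg : 0 ≤ᵐ[MeasureTheory.volume.restrict (Ioo (0:ℝ) π)] g := by
      filter_upwards [MeasureTheory.ae_restrict_mem measurableSet_Ioo] with r hr
      have hs : 0 ≤ Real.sin r := Real.sin_nonneg_of_nonneg_of_le_pi hr.1.le hr.2.le
      have : ((p - 2) * wk r) * wk r = (p-2) * (wk r)^2 := by ring
      simp only [hg, this]
      positivity
    -- find ε with wk > 1/2 on [0, ε)
    have hcont0 : ContinuousAt wk 0 := (hd1 0 (left_mem_Icc.mpr hπ.le)).continuousAt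
    obtain ⟨ε, hε, hball⟩ := Metric.continuousAt_iff.mp hcont0 (1/2) (by norm_num)
    set ε' : ℝ := min (ε/2) (π/2) with hε'
    have hε'0 : 0 < ε' := by positivity
    have hε'π : ε' < π := lt_of_le_of_lt (min_le_right _ _) (by linarith)
    have hεsub : Ioo (0:ℝ) ε' ⊆ Function.support g ∩ Ioo 0 π := by
      intro r hr
      have hrπ : r ∈ Ioo (0:ℝ) π := ⟨hr.1, lt_trans hr.2 hε'π⟩
      refine ⟨?_, hrπ⟩
      have hdist : dist r 0 < ε := by
        rw [Real.dist_eq, sub_zero, abs_of_pos hr.1]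
        have := hr.2
        have h2 : ε' ≤ ε / 2 := min_le_left _ _
        linarith
      have := hball hdist
      rw [Real.dist_eq, h0] at this
      have hwkpos : 0 < wk r := by
        have := abs_lt.mp this
        linarith [this.1]
      have hs : 0 < Real.sin r := Real.sin_pos_of_pos_of_lt_pi hrπ.1 hrπ.2
      simp only [Function.mem_support, hg]
      positivity
    have hpos : 0 < ∫ r in Ioo (0:ℝ) π, g r := by
      rw [MeasureTheory.setIntegral_pos_iff_support_of_nonneg_ae hnonneg hInt]
      calc (0:ENNReal) < MeasureTheory.volume (Ioo (0:ℝ) ε') := by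
            rw [Real.volume_Ioo]
            simp only [sub_zero]
            exact ENNReal.ofReal_pos.mpr hε'0
        _ ≤ _ := MeasureTheory.measure_mono hεsub
    exact ne_of_gt hpos
end
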